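/- Let S, L, A, M, Y be discrete random variables on a finite probability space, with P(S=0) > 0, and suppose the working limits e*, f*, g*, h*, T1*, T2* satisfy model M1: e*(l) = P(A=a | S=1, L=l), f*(m,l) = P(A=a | S=1, M=m, L=l), g*(s,l)(m) = P(M=m | S=s, L=l), h*(s,l) = P(S=s | L=l), all bounded below by some \epsilon > 0, while T1* and T2* are arbitrary bounded functions with T2*(l,a') = \sum_m T1*(l,m) P(M=m | L=l, A=a', S=1) for all l, a'. Then E[ H(\gamma, e*, f*, g*, h*, T2*, T1*) ] = \Psi^a, where \gamma = 1/P(S=0) and H is defined by H = \gamma [ (1-S) f*(M,L) g*(1,L)(M) / (e*(L) g*(0,L)(M)) (Y - T1*(L,M)) + S 1{A=a} h*(0,L)/(e*(L) h*(1,L)) (T1*(L,M) - T2*(L,A)) + (1-S) T2*(L,a) ], and \Psi^a = \sum_{m,l} E[Y | M=m, L=l, S=0] P(M=m | L=l, A=a, S=1) P(L=l | S=0). -/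

import Mathlib

open Finset
open scoped Classical

noncomputable section

/-- Probability of an event under weight function `w`. -/
def Pr {Ω : Type*} [Fintype Ω] (w : Ω → ℝ) (E : Ω → Prop) : ℝ :=
  ∑ ω, if E ω then w ω else 0

/-- Conditional probability `P(E | F)`. -/
def CP {Ω : Type*} [Fintype Ω] (w : Ω → ℝ) (E F : Ω → Prop) : ℝ :=
  Pr w (fun ω => E ω ∧ F ω) / Pr w F

/-- Conditional expectation `E[X | F]`. -/
def CE {Ω : Type*} [Fintype Ω] (w : Ω → ℝ) (X : Ω → ℝ) (F : Ω → Prop) : ℝ :=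
  (∑ ω, if F ω then w ω * X ω else 0) / Pr w F

/-- The estimating function `H` built from working nuisance functions. -/
def Hfun {Ω 𝕃 𝕄 𝔸 : Type*}
    (S : Ω → ℕ) (L : Ω → 𝕃) (A : Ω → 𝔸) (M : Ω → 𝕄) (Y : Ω → ℝ) (a : 𝔸)
    (γ : ℝ) (e : 𝕃 → ℝ) (f : 𝕄 → 𝕃 → ℝ) (g : ℕ → 𝕃 → 𝕄 → ℝ) (h : ℕ → 𝕃 → ℝ)
    (T2 : 𝕃 → 𝔸 → ℝ) (T1 : 𝕃 → 𝕄 → ℝ) (ω : Ω) : ℝ :=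
  γ * ((if S ω = 0 then (1:ℝ) else 0) * f (M ω) (L ω) * g 1 (L ω) (M ω) /
        (e (L ω) * g 0 (L ω) (M ω)) * (Y ω - T1 (L ω) (M ω)) +
      (if S ω = 1 ∧ A ω = a then (1:ℝ) else 0) * h 0 (L ω) /
        (e (L ω) * h 1 (L ω)) * (T1 (L ω) (M ω) - T2 (L ω) (A ω)) +
      (if S ω = 0 then (1:ℝ) else 0) * T2 (L ω) a)

/-- The identified g-formula functional `Ψ^a`. -/
def PsiA {Ω 𝕃 𝕄 𝔸 : Type*} [Fintype Ω] [Fintype 𝕃] [Fintype 𝕄]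
    (w : Ω → ℝ) (S : Ω → ℕ) (L : Ω → 𝕃) (A : Ω → 𝔸) (M : Ω → 𝕄)
    (Y : Ω → ℝ) (a : 𝔸) : ℝ :=
  ∑ m : 𝕄, ∑ l : 𝕃,
    CE w Y (fun ω => M ω = m ∧ L ω = l ∧ S ω = 0) *
    CP w (fun ω => M ω = m) (fun ω => L ω = l ∧ A ω = a ∧ S ω = 1) *
    CP w (fun ω => L ω = l) (fun ω => S ω = 0)

section Aux
variable {Ω : Type*} [Fintype Ω]

lemma sum_if_congr' (X : Ω → ℝ) {P Q : Ω → Prop} (h : ∀ ω, P ω ↔ Q ω) :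
    (∑ ω, if P ω then X ω else 0) = ∑ ω, if Q ω then X ω else 0 :=
  Finset.sum_congr rfl fun ω _ => by simp [h ω]

lemma Pr_congr' (w : Ω → ℝ) {P Q : Ω → Prop} (h : ∀ ω, P ω ↔ Q ω) :
    Pr w P = Pr w Q := sum_if_congr' w h

lemma Pr_mono' (w : Ω → ℝ) (hw : ∀ ω, 0 ≤ w ω) {P Q : Ω → Prop}
    (h : ∀ ω, P ω → Q ω) : Pr w P ≤ Pr w Q := by
  refine Finset.sum_le_sum fun ω _ => ?_
  by_cases hp : P ω
  · simp [hp, h ω hp]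
  · simp only [hp, if_false]
    split <;> simp [hw ω]

lemma fiber_double {𝕄 𝕃 : Type*} [Fintype 𝕄] [Fintype 𝕃]
    (M : Ω → 𝕄) (L : Ω → 𝕃) (X : Ω → ℝ) :
    (∑ ω, X ω) = ∑ m : 𝕄, ∑ l : 𝕃, ∑ ω, if M ω = m ∧ L ω = l then X ω else 0 := by
  have key : ∀ ω, X ω = ∑ m : 𝕄, ∑ l : 𝕃, if M ω = m ∧ L ω = l then X ω else 0 := by
    intro ω
    simp [ite_and, Finset.sum_ite_eq]
  calc (∑ ω, X ω) = ∑ ω, ∑ m : 𝕄, ∑ l : 𝕃, if M ω = m ∧ L ω = l then X ω else 0 :=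
        Finset.sum_congr rfl fun ω _ => key ω
    _ = ∑ m : 𝕄, ∑ l : 𝕃, ∑ ω, if M ω = m ∧ L ω = l then X ω else 0 := by
        rw [Finset.sum_comm]
        exact Finset.sum_congr rfl fun m _ => Finset.sum_comm

lemma sum_fiber_m {𝕄 : Type*} [Fintype 𝕄] (M : Ω → 𝕄) (P : Ω → Prop) (X : Ω → ℝ) :
    (∑ m : 𝕄, ∑ ω, if P ω ∧ M ω = m then X ω else 0) = ∑ ω, if P ω then X ω else 0 := by
  rw [Finset.sum_comm]
  refine Finset.sum_congr rfl fun ω _ => ?_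
  by_cases h : P ω <;> simp [h, Finset.sum_ite_eq]

lemma alg (N p0ml p1ml p1aml p0l p1l p1al pl t1 t2 : ℝ)
    (h0ml : p0ml ≠ 0) (h1ml : p1ml ≠ 0) (h1al : p1al ≠ 0)
    (h0l : p0l ≠ 0) (h1l : p1l ≠ 0) (hl : pl ≠ 0) :
    (p1aml / p1ml) * (p1ml / p1l) / ((p1al / p1l) * (p0ml / p0l)) * (N - t1 * p0ml)
      + (p0l / pl) / ((p1al / p1l) * (p1l / pl)) * (t1 - t2) * p1aml
      + t2 * p0ml
    = N * p1aml * p0l / (p0ml * p1al) + t2 * (p0ml - p1aml * p0l / p1al) := by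
  field_simp
  ring

end Aux

/-- first arm of triple robustness (model M1): when all
propensity-type nuisance functions are correct, `H` is unbiased for `Ψ^a`. -/
theorem triple_robust_M1
    {Ω 𝕃 𝕄 𝔸 : Type*} [Fintype Ω] [Fintype 𝕃] [Fintype 𝕄] [Fintype 𝔸]
    (w : Ω → ℝ) (hw0 : ∀ ω, 0 ≤ w ω) (hw1 : ∑ ω, w ω = 1)
    (S : Ω → ℕ) (L : Ω → 𝕃) (A : Ω → 𝔸) (M : Ω → 𝕄) (Y : Ω → ℝ) (a : 𝔸)
    (hposS0 : Pr w (fun ω => S ω = 0) > 0)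
    (hpos : ∀ m l a' s, s = 0 ∨ s = 1 →
      Pr w (fun ω => S ω = s ∧ M ω = m ∧ L ω = l) > 0 ∧
      Pr w (fun ω => S ω = s ∧ A ω = a' ∧ L ω = l) > 0 ∧
      Pr w (fun ω => L ω = l) > 0)
    (e : 𝕃 → ℝ) (f : 𝕄 → 𝕃 → ℝ) (g : ℕ → 𝕃 → 𝕄 → ℝ) (h : ℕ → 𝕃 → ℝ)
    (T1 : 𝕃 → 𝕄 → ℝ) (T2 : 𝕃 → 𝔸 → ℝ) (ε : ℝ) (hε : ε > 0)
    -- model M1: all propensity-type nuisances correct and bounded below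
    (he : ∀ l, e l = CP w (fun ω => A ω = a) (fun ω => S ω = 1 ∧ L ω = l) ∧ e l > ε)
    (hf : ∀ m l, f m l =
      CP w (fun ω => A ω = a) (fun ω => S ω = 1 ∧ M ω = m ∧ L ω = l) ∧ f m l > ε)
    (hg : ∀ s m l, s = 0 ∨ s = 1 →
      g s l m = CP w (fun ω => M ω = m) (fun ω => S ω = s ∧ L ω = l) ∧ g s l m > ε)
    (hh : ∀ s l, s = 0 ∨ s = 1 →
      h s l = CP w (fun ω => S ω = s) (fun ω => L ω = l) ∧ h s l > ε)
    -- T1 arbitrary but bounded; T2 internally consistent with T1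
    (hT1bdd : ∃ C : ℝ, ∀ l m, |T1 l m| ≤ C)
    (hT2 : ∀ l a', T2 l a' = ∑ m : 𝕄,
      T1 l m * CP w (fun ω => M ω = m) (fun ω => L ω = l ∧ A ω = a' ∧ S ω = 1)) :
    (∑ ω, w ω *
        Hfun S L A M Y a (1 / Pr w (fun ω => S ω = 0)) e f g h T2 T1 ω) =
      PsiA w S L A M Y a := by
  classical
  -- nonemptiness
  have hΩ : Nonempty Ω := by
    by_contra hne
    rw [not_nonempty_iff] at hne
    simp [Pr] at hposS0
  have hM : Nonempty 𝕄 := ⟨M (Classical.arbitrary Ω)⟩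
  set m0 : 𝕄 := Classical.arbitrary 𝕄 with hm0
  -- positivity
  have hP0 : Pr w (fun ω => S ω = 0) > 0 := hposS0
  have hP0ml : ∀ m l, Pr w (fun ω => S ω = 0 ∧ M ω = m ∧ L ω = l) > 0 :=
    fun m l => (hpos m l a 0 (Or.inl rfl)).1
  have hP1ml : ∀ m l, Pr w (fun ω => S ω = 1 ∧ M ω = m ∧ L ω = l) > 0 :=
    fun m l => (hpos m l a 1 (Or.inr rfl)).1
  have hP1al : ∀ l, Pr w (fun ω => S ω = 1 ∧ A ω = a ∧ L ω = l) > 0 :=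
    fun l => (hpos m0 l a 1 (Or.inr rfl)).2.1
  have hPl : ∀ l, Pr w (fun ω => L ω = l) > 0 :=
    fun l => (hpos m0 l a 0 (Or.inl rfl)).2.2
  have hP0l : ∀ l, Pr w (fun ω => S ω = 0 ∧ L ω = l) > 0 :=
    fun l => lt_of_lt_of_le (hP0ml m0 l)
      (Pr_mono' w hw0 (fun ω hc => ⟨hc.1, hc.2.2⟩))
  have hP1l : ∀ l, Pr w (fun ω => S ω = 1 ∧ L ω = l) > 0 :=
    fun l => lt_of_lt_of_le (hP1ml m0 l)
      (Pr_mono' w hw0 (fun ω hc => ⟨hc.1, hc.2.2⟩))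
  -- nuisance functions as ratios of joint probabilities
  have he' : ∀ l, e l =
      Pr w (fun ω => S ω = 1 ∧ A ω = a ∧ L ω = l) /
      Pr w (fun ω => S ω = 1 ∧ L ω = l) := by
    intro l
    rw [(he l).1]
    unfold CP
    congr 1
    exact Pr_congr' w fun ω => by tauto
  have hf' : ∀ m l, f m l =
      Pr w (fun ω => S ω = 1 ∧ A ω = a ∧ M ω = m ∧ L ω = l) /
      Pr w (fun ω => S ω = 1 ∧ M ω = m ∧ L ω = l) := by
    intro m l
    rw [(hf m l).1]
    unfold CP
    congr 1
    exact Pr_congr' w fun ω => by tauto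
  have hg1' : ∀ m l, g 1 l m =
      Pr w (fun ω => S ω = 1 ∧ M ω = m ∧ L ω = l) /
      Pr w (fun ω => S ω = 1 ∧ L ω = l) := by
    intro m l
    rw [(hg 1 m l (Or.inr rfl)).1]
    unfold CP
    congr 1
    exact Pr_congr' w fun ω => by tauto
  have hg0' : ∀ m l, g 0 l m =
      Pr w (fun ω => S ω = 0 ∧ M ω = m ∧ L ω = l) /
      Pr w (fun ω => S ω = 0 ∧ L ω = l) := by
    intro m l
    rw [(hg 0 m l (Or.inl rfl)).1]
    unfold CP
    congr 1
    exact Pr_congr' w fun ω => by tauto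
  have hh0' : ∀ l, h 0 l =
      Pr w (fun ω => S ω = 0 ∧ L ω = l) / Pr w (fun ω => L ω = l) := by
    intro l
    rw [(hh 0 l (Or.inl rfl)).1]
    unfold CP
    congr 1
  have hh1' : ∀ l, h 1 l =
      Pr w (fun ω => S ω = 1 ∧ L ω = l) / Pr w (fun ω => L ω = l) := by
    intro l
    rw [(hh 1 l (Or.inr rfl)).1]
    unfold CP
    congr 1
  have hT2' : ∀ l, T2 l a = ∑ m : 𝕄, T1 l m *
      (Pr w (fun ω => S ω = 1 ∧ A ω = a ∧ M ω = m ∧ L ω = l) /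
       Pr w (fun ω => S ω = 1 ∧ A ω = a ∧ L ω = l)) := by
    intro l
    rw [hT2 l a]
    refine Finset.sum_congr rfl fun m _ => ?_
    unfold CP
    rw [Pr_congr' w (show ∀ ω, (M ω = m ∧ (L ω = l ∧ A ω = a ∧ S ω = 1)) ↔
        (S ω = 1 ∧ A ω = a ∧ M ω = m ∧ L ω = l) from fun ω => by tauto),
      Pr_congr' w (show ∀ ω, (L ω = l ∧ A ω = a ∧ S ω = 1) ↔
        (S ω = 1 ∧ A ω = a ∧ L ω = l) from fun ω => by tauto)]
  -- marginalization
  have marg0 : ∀ l, (∑ m : 𝕄, Pr w (fun ω => S ω = 0 ∧ M ω = m ∧ L ω = l)) =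
      Pr w (fun ω => S ω = 0 ∧ L ω = l) := by
    intro l
    unfold Pr
    rw [Finset.sum_comm]
    refine Finset.sum_congr rfl fun ω _ => ?_
    by_cases h0 : S ω = 0 ∧ L ω = l
    · simp [h0.1, h0.2, Finset.sum_ite_eq]
    · have hn : ∀ m, ¬(S ω = 0 ∧ M ω = m ∧ L ω = l) := fun m hc => h0 ⟨hc.1, hc.2.2⟩
      simp [hn, h0]
  have marg1 : ∀ l, (∑ m : 𝕄, Pr w (fun ω => S ω = 1 ∧ A ω = a ∧ M ω = m ∧ L ω = l)) =
      Pr w (fun ω => S ω = 1 ∧ A ω = a ∧ L ω = l) := by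
    intro l
    unfold Pr
    rw [Finset.sum_comm]
    refine Finset.sum_congr rfl fun ω _ => ?_
    by_cases h0 : S ω = 1 ∧ A ω = a ∧ L ω = l
    · simp [h0.1, h0.2.1, h0.2.2, Finset.sum_ite_eq]
    · have hn : ∀ m, ¬(S ω = 1 ∧ A ω = a ∧ M ω = m ∧ L ω = l) :=
        fun m hc => h0 ⟨hc.1, hc.2.1, hc.2.2.2⟩
      simp [hn, h0]
  -- abbreviation for CE numerator
  -- Step 1: split the sum into three stratified sums
  have step1 : (∑ ω, w ω *
        Hfun S L A M Y a (1 / Pr w (fun ω => S ω = 0)) e f g h T2 T1 ω) =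
      (1 / Pr w (fun ω => S ω = 0)) *
      ((∑ ω, w ω * ((if S ω = 0 then (1:ℝ) else 0) * f (M ω) (L ω) * g 1 (L ω) (M ω) /
          (e (L ω) * g 0 (L ω) (M ω)) * (Y ω - T1 (L ω) (M ω)))) +
       (∑ ω, w ω * ((if S ω = 1 ∧ A ω = a then (1:ℝ) else 0) * h 0 (L ω) /
          (e (L ω) * h 1 (L ω)) * (T1 (L ω) (M ω) - T2 (L ω) (A ω)))) +
       (∑ ω, w ω * ((if S ω = 0 then (1:ℝ) else 0) * T2 (L ω) a))) := by
    rw [mul_add, mul_add, Finset.mul_sum, Finset.mul_sum,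
      Finset.mul_sum, ← Finset.sum_add_distrib, ← Finset.sum_add_distrib]
    refine Finset.sum_congr rfl fun ω _ => ?_
    unfold Hfun
    ring
  -- Step 2: stratify term 1
  have claim1 : (∑ ω, w ω * ((if S ω = 0 then (1:ℝ) else 0) * f (M ω) (L ω) * g 1 (L ω) (M ω) /
          (e (L ω) * g 0 (L ω) (M ω)) * (Y ω - T1 (L ω) (M ω)))) =
      ∑ m : 𝕄, ∑ l : 𝕃, f m l * g 1 l m / (e l * g 0 l m) *
        ((∑ ω, if S ω = 0 ∧ M ω = m ∧ L ω = l then w ω * Y ω else 0)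
          - T1 l m * Pr w (fun ω => S ω = 0 ∧ M ω = m ∧ L ω = l)) := by
    rw [fiber_double M L]
    refine Finset.sum_congr rfl fun m _ => Finset.sum_congr rfl fun l _ => ?_
    unfold Pr
    have key : ∀ ω : Ω,
        (if M ω = m ∧ L ω = l then w ω * ((if S ω = 0 then (1:ℝ) else 0) * f (M ω) (L ω) * g 1 (L ω) (M ω) /
          (e (L ω) * g 0 (L ω) (M ω)) * (Y ω - T1 (L ω) (M ω))) else 0) =
        f m l * g 1 l m / (e l * g 0 l m) *
          ((if S ω = 0 ∧ M ω = m ∧ L ω = l then w ω * Y ω else 0)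
            - T1 l m * (if S ω = 0 ∧ M ω = m ∧ L ω = l then w ω else 0)) := by
      intro ω
      by_cases h1 : M ω = m ∧ L ω = l
      · obtain ⟨hm, hl⟩ := h1
        by_cases hs : S ω = 0 <;> simp [hm, hl, hs] <;> ring
      · have h2 : ¬(S ω = 0 ∧ M ω = m ∧ L ω = l) := fun hc => h1 ⟨hc.2.1, hc.2.2⟩
        simp [h1, h2]
    rw [Finset.sum_congr rfl fun ω _ => key ω, ← Finset.mul_sum,
      Finset.sum_sub_distrib, ← Finset.mul_sum]
    congr!
  -- Step 3: stratify term 2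
  have claim2 : (∑ ω, w ω * ((if S ω = 1 ∧ A ω = a then (1:ℝ) else 0) * h 0 (L ω) /
          (e (L ω) * h 1 (L ω)) * (T1 (L ω) (M ω) - T2 (L ω) (A ω)))) =
      ∑ m : 𝕄, ∑ l : 𝕃, h 0 l / (e l * h 1 l) * (T1 l m - T2 l a) *
        Pr w (fun ω => S ω = 1 ∧ A ω = a ∧ M ω = m ∧ L ω = l) := by
    rw [fiber_double M L]
    refine Finset.sum_congr rfl fun m _ => Finset.sum_congr rfl fun l _ => ?_
    unfold Pr
    have key : ∀ ω : Ω,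
        (if M ω = m ∧ L ω = l then w ω * ((if S ω = 1 ∧ A ω = a then (1:ℝ) else 0) * h 0 (L ω) /
          (e (L ω) * h 1 (L ω)) * (T1 (L ω) (M ω) - T2 (L ω) (A ω))) else 0) =
        h 0 l / (e l * h 1 l) * (T1 l m - T2 l a) *
          (if S ω = 1 ∧ A ω = a ∧ M ω = m ∧ L ω = l then w ω else 0) := by
      intro ω
      by_cases h1 : M ω = m ∧ L ω = l
      · obtain ⟨hm, hl⟩ := h1
        by_cases hs : S ω = 1 ∧ A ω = a
        · simp [hm, hl, hs.1, hs.2]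
          ring
        · have h2 : ¬(S ω = 1 ∧ A ω = a ∧ M ω = m ∧ L ω = l) :=
            fun hc => hs ⟨hc.1, hc.2.1⟩
          simp [hm, hl, hs, h2]
      · have h2 : ¬(S ω = 1 ∧ A ω = a ∧ M ω = m ∧ L ω = l) :=
          fun hc => h1 ⟨hc.2.2.1, hc.2.2.2⟩
        simp [h1, h2]
    rw [Finset.sum_congr rfl fun ω _ => key ω, ← Finset.mul_sum]
    congr!
  -- Step 4: stratify term 3
  have claim3 : (∑ ω, w ω * ((if S ω = 0 then (1:ℝ) else 0) * T2 (L ω) a)) =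
      ∑ m : 𝕄, ∑ l : 𝕃, T2 l a * Pr w (fun ω => S ω = 0 ∧ M ω = m ∧ L ω = l) := by
    rw [fiber_double M L]
    refine Finset.sum_congr rfl fun m _ => Finset.sum_congr rfl fun l _ => ?_
    unfold Pr
    have key : ∀ ω : Ω,
        (if M ω = m ∧ L ω = l then w ω * ((if S ω = 0 then (1:ℝ) else 0) * T2 (L ω) a) else 0) =
        T2 l a * (if S ω = 0 ∧ M ω = m ∧ L ω = l then w ω else 0) := by
      intro ω
      by_cases h1 : M ω = m ∧ L ω = l
      · obtain ⟨hm, hl⟩ := h1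
        by_cases hs : S ω = 0 <;> simp [hm, hl, hs] <;> ring
      · have h2 : ¬(S ω = 0 ∧ M ω = m ∧ L ω = l) := fun hc => h1 ⟨hc.2.1, hc.2.2⟩
        simp [h1, h2]
    rw [Finset.sum_congr rfl fun ω _ => key ω, ← Finset.mul_sum]
    congr!
  rw [step1, claim1, claim2, claim3]
  -- combine into a single double sum and apply the algebraic identity
  have comb : (∑ m : 𝕄, ∑ l : 𝕃, f m l * g 1 l m / (e l * g 0 l m) *
        ((∑ ω, if S ω = 0 ∧ M ω = m ∧ L ω = l then w ω * Y ω else 0)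
          - T1 l m * Pr w (fun ω => S ω = 0 ∧ M ω = m ∧ L ω = l))) +
      (∑ m : 𝕄, ∑ l : 𝕃, h 0 l / (e l * h 1 l) * (T1 l m - T2 l a) *
        Pr w (fun ω => S ω = 1 ∧ A ω = a ∧ M ω = m ∧ L ω = l)) +
      (∑ m : 𝕄, ∑ l : 𝕃, T2 l a * Pr w (fun ω => S ω = 0 ∧ M ω = m ∧ L ω = l)) =
      (∑ m : 𝕄, ∑ l : 𝕃,
        (∑ ω, if S ω = 0 ∧ M ω = m ∧ L ω = l then w ω * Y ω else 0) *
          Pr w (fun ω => S ω = 1 ∧ A ω = a ∧ M ω = m ∧ L ω = l) *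
          Pr w (fun ω => S ω = 0 ∧ L ω = l) /
          (Pr w (fun ω => S ω = 0 ∧ M ω = m ∧ L ω = l) *
           Pr w (fun ω => S ω = 1 ∧ A ω = a ∧ L ω = l))) +
      (∑ m : 𝕄, ∑ l : 𝕃, T2 l a *
        (Pr w (fun ω => S ω = 0 ∧ M ω = m ∧ L ω = l) -
          Pr w (fun ω => S ω = 1 ∧ A ω = a ∧ M ω = m ∧ L ω = l) *
          Pr w (fun ω => S ω = 0 ∧ L ω = l) /
          Pr w (fun ω => S ω = 1 ∧ A ω = a ∧ L ω = l))) := by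
    rw [← Finset.sum_add_distrib, ← Finset.sum_add_distrib, ← Finset.sum_add_distrib]
    refine Finset.sum_congr rfl fun m _ => ?_
    rw [← Finset.sum_add_distrib, ← Finset.sum_add_distrib, ← Finset.sum_add_distrib]
    refine Finset.sum_congr rfl fun l _ => ?_
    rw [he' l, hf' m l, hg1' m l, hg0' m l, hh0' l, hh1' l]
    exact alg _ _ _ _ _ _ _ _ _ _
      (ne_of_gt (hP0ml m l)) (ne_of_gt (hP1ml m l)) (ne_of_gt (hP1al l))
      (ne_of_gt (hP0l l)) (ne_of_gt (hP1l l)) (ne_of_gt (hPl l))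
  rw [comb, mul_add]
  -- second part vanishes
  have hB : (∑ m : 𝕄, ∑ l : 𝕃, T2 l a *
        (Pr w (fun ω => S ω = 0 ∧ M ω = m ∧ L ω = l) -
          Pr w (fun ω => S ω = 1 ∧ A ω = a ∧ M ω = m ∧ L ω = l) *
          Pr w (fun ω => S ω = 0 ∧ L ω = l) /
          Pr w (fun ω => S ω = 1 ∧ A ω = a ∧ L ω = l))) = 0 := by
    rw [Finset.sum_comm]
    refine Finset.sum_eq_zero fun l _ => ?_
    rw [← Finset.mul_sum]
    have hz : (∑ m : 𝕄, (Pr w (fun ω => S ω = 0 ∧ M ω = m ∧ L ω = l) -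
          Pr w (fun ω => S ω = 1 ∧ A ω = a ∧ M ω = m ∧ L ω = l) *
          Pr w (fun ω => S ω = 0 ∧ L ω = l) /
          Pr w (fun ω => S ω = 1 ∧ A ω = a ∧ L ω = l))) = 0 := by
      rw [Finset.sum_sub_distrib, marg0 l]
      have : (∑ m : 𝕄, Pr w (fun ω => S ω = 1 ∧ A ω = a ∧ M ω = m ∧ L ω = l) *
          Pr w (fun ω => S ω = 0 ∧ L ω = l) /
          Pr w (fun ω => S ω = 1 ∧ A ω = a ∧ L ω = l)) =
          (∑ m : 𝕄, Pr w (fun ω => S ω = 1 ∧ A ω = a ∧ M ω = m ∧ L ω = l)) *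
          Pr w (fun ω => S ω = 0 ∧ L ω = l) /
          Pr w (fun ω => S ω = 1 ∧ A ω = a ∧ L ω = l) := by
        rw [Finset.sum_mul, Finset.sum_div]
      rw [this, marg1 l]
      have hne := ne_of_gt (hP1al l)
      field_simp
      ring
    rw [hz, mul_zero]
  rw [hB, mul_zero, add_zero]
  -- first part equals PsiA
  unfold PsiA
  rw [Finset.mul_sum]
  refine Finset.sum_congr rfl fun m _ => ?_
  rw [Finset.mul_sum]
  refine Finset.sum_congr rfl fun l _ => ?_
  have hCE : CE w Y (fun ω => M ω = m ∧ L ω = l ∧ S ω = 0) =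
      (∑ ω, if S ω = 0 ∧ M ω = m ∧ L ω = l then w ω * Y ω else 0) /
      Pr w (fun ω => S ω = 0 ∧ M ω = m ∧ L ω = l) := by
    unfold CE
    congr 1
    · refine Finset.sum_congr rfl fun ω _ => ?_
      by_cases hx : S ω = 0 ∧ M ω = m ∧ L ω = l
      · have hy : M ω = m ∧ L ω = l ∧ S ω = 0 := ⟨hx.2.1, hx.2.2, hx.1⟩
        simp [hx, hy]
      · have hy : ¬(M ω = m ∧ L ω = l ∧ S ω = 0) := fun hc => hx ⟨hc.2.2, hc.1, hc.2.1⟩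
        simp [hx, hy]
    · exact Pr_congr' (P := fun ω => M ω = m ∧ L ω = l ∧ S ω = 0)
        (Q := fun ω => S ω = 0 ∧ M ω = m ∧ L ω = l) w fun ω => by tauto
  have hCPm : CP w (fun ω => M ω = m) (fun ω => L ω = l ∧ A ω = a ∧ S ω = 1) =
      Pr w (fun ω => S ω = 1 ∧ A ω = a ∧ M ω = m ∧ L ω = l) /
      Pr w (fun ω => S ω = 1 ∧ A ω = a ∧ L ω = l) := by
    unfold CP
    rw [Pr_congr' w (show ∀ ω, (M ω = m ∧ (L ω = l ∧ A ω = a ∧ S ω = 1)) ↔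
        (S ω = 1 ∧ A ω = a ∧ M ω = m ∧ L ω = l) from fun ω => by tauto),
      Pr_congr' w (show ∀ ω, (L ω = l ∧ A ω = a ∧ S ω = 1) ↔
        (S ω = 1 ∧ A ω = a ∧ L ω = l) from fun ω => by tauto)]
  have hCPl : CP w (fun ω => L ω = l) (fun ω => S ω = 0) =
      Pr w (fun ω => S ω = 0 ∧ L ω = l) / Pr w (fun ω => S ω = 0) := by
    unfold CP
    rw [Pr_congr' w (show ∀ ω, (L ω = l ∧ S ω = 0) ↔ (S ω = 0 ∧ L ω = l)
        from fun ω => by tauto)]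
  rw [hCE, hCPm, hCPl]
  field_simp
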